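/- Let k ≥ 3 be an integer, let ñ be a positive integer, and let γ be a rational number with 0 < γ < 1 such that γñ is an integer. Let V be the disjoint union of sets V_1, …, V_{k−1} with |V_i| = ñ^i, and for each i ∈ [k−1] let S_i ⊆ V_i with |S_i| = (1 − γ)ñ^i. Define additive functions on V by: f_i(v) = ñ^{k−i} if v ∈ V_i and f_i(v) = 0 otherwise, for i ∈ [k−1]; and f_k(v) = (1 − γ)ñ^{k−i} if v ∈ S_i for some i ∈ [k−1], and f_k(v) = −ñ^{k+1} otherwise. Let f(X) = max_{i ∈ [k]} f_i(X). Then for every nonempty X ⊆ V with f(X) = f_k(X), there exists i ∈ {2, 3, …, k−1} such that X ∩ V_i ⊆ S_i and |X ∩ V_i| ≥ γñ/(k−2). -/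

import Mathlib

set_option maxHeartbeats 1000000


/-- The hard instance for `k`-XOS maximization. `V` is the disjoint union of
`V_1, …, V_{k−1}` with `|V_i| = ñ^i`, `S_i ⊆ V_i` with `|S_i| = (1−γ)ñ^i`; the additive
functions are `f_i(v) = ñ^{k−i}` on `V_i` and `0` elsewhere (`i ∈ [k−1]`), and
`f_k(v) = (1−γ)ñ^{k−i}` if `v ∈ S_i`, and `−ñ^{k+1}` otherwise; `f = max_i f_i`. Then every
nonempty `X` with `f(X) = f_k(X)` has some `i ∈ {2, …, k−1}` with `X ∩ V_i ⊆ S_i` and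
`|X ∩ V_i| ≥ γñ/(k−2)`. -/
theorem stmt13 {V : Type*} [Fintype V] [DecidableEq V]
    {k : ℕ} (hk : 3 ≤ k) {nt : ℕ} (hnt : 1 ≤ nt)
    (γ : ℚ) (hγ0 : 0 < γ) (hγ1 : γ < 1) (hγint : ∃ z : ℤ, γ * (nt : ℚ) = (z : ℚ))
    (Vs Ss : ℕ → Finset V)
    (hdisj : ∀ i ∈ Finset.Icc 1 (k - 1), ∀ j ∈ Finset.Icc 1 (k - 1),
      i ≠ j → Disjoint (Vs i) (Vs j))
    (hcover : ∀ v : V, ∃ i ∈ Finset.Icc 1 (k - 1), v ∈ Vs i)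
    (hcard : ∀ i ∈ Finset.Icc 1 (k - 1), (Vs i).card = nt ^ i)
    (hS : ∀ i ∈ Finset.Icc 1 (k - 1),
      Ss i ⊆ Vs i ∧ ((Ss i).card : ℝ) = (1 - (γ : ℝ)) * (nt : ℝ) ^ i)
    (w : ℕ → V → ℝ)
    (hw : ∀ i ∈ Finset.Icc 1 (k - 1), ∀ v : V,
      w i v = if v ∈ Vs i then (nt : ℝ) ^ (k - i) else 0)
    (hwk1 : ∀ i ∈ Finset.Icc 1 (k - 1), ∀ v ∈ Ss i,
      w k v = (1 - (γ : ℝ)) * (nt : ℝ) ^ (k - i))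
    (hwk2 : ∀ v : V, (∀ i ∈ Finset.Icc 1 (k - 1), v ∉ Ss i) → w k v = -(nt : ℝ) ^ (k + 1))
    (f : Finset V → ℝ)
    (hf : ∀ X : Finset V,
      IsGreatest ((fun i : ℕ => ∑ v ∈ X, w i v) '' (Set.Icc 1 k)) (f X)) :
    ∀ X : Finset V, X.Nonempty → f X = ∑ v ∈ X, w k v →
      ∃ i : ℕ, 2 ≤ i ∧ i ≤ k - 1 ∧ X ∩ Vs i ⊆ Ss i ∧
        (γ : ℝ) * (nt : ℝ) / ((k : ℝ) - 2) ≤ ((X ∩ Vs i).card : ℝ) := by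

  intro X hXne hfX
  by_contra hcon
  push_neg at hcon
  -- basic numeric facts
  have hntQ : (0:ℚ) < (nt:ℚ) := by exact_mod_cast hnt
  have hnt2 : 2 ≤ nt := by
    obtain ⟨z, hz⟩ := hγint
    have hz0 : (0:ℚ) < (z:ℚ) := hz ▸ mul_pos hγ0 hntQ
    have hz1 : (1:ℤ) ≤ z := by exact_mod_cast hz0
    have h1 : (1:ℚ) ≤ γ * (nt:ℚ) := by rw [hz]; exact_mod_cast hz1
    have h2 : γ * (nt:ℚ) < (nt:ℚ) := by
      have := mul_lt_mul_of_pos_right hγ1 hntQ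
      simpa using this
    have h3 : (1:ℚ) < (nt:ℚ) := lt_of_le_of_lt h1 h2
    have h4 : 1 < nt := by exact_mod_cast h3
    omega
  have hn2 : (2:ℝ) ≤ (nt:ℝ) := by exact_mod_cast hnt2
  have hn1 : (1:ℝ) ≤ (nt:ℝ) := by linarith
  have hn0 : (0:ℝ) < (nt:ℝ) := by linarith
  have hg0 : (0:ℝ) < (γ:ℝ) := by exact_mod_cast hγ0
  have hg1 : ((γ:ℝ)) < 1 := by exact_mod_cast hγ1
  have hg1' : (0:ℝ) ≤ 1 - (γ:ℝ) := by linarith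
  have hkR : (3:ℝ) ≤ (k:ℝ) := by exact_mod_cast hk
  have hk2 : (0:ℝ) < (k:ℝ) - 2 := by linarith
  have hc0 : (0:ℝ) < (γ:ℝ) * (nt:ℝ) / ((k:ℝ) - 2) := by positivity
  have hpowadd : ∀ a b c : ℕ, a + b = c → (nt:ℝ) ^ a * (nt:ℝ) ^ b = (nt:ℝ) ^ c := by
    intro a b c habc
    rw [← pow_add, habc]
  -- upper bound facts from IsGreatest
  have hub : ∀ i, 1 ≤ i → i ≤ k → ∑ v ∈ X, w i v ≤ ∑ v ∈ X, w k v := by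
    intro i h1 h2
    have hmem : (∑ v ∈ X, w i v) ∈ ((fun i : ℕ => ∑ v ∈ X, w i v) '' (Set.Icc 1 k)) :=
      ⟨i, ⟨h1, h2⟩, rfl⟩
    have := (hf X).2 hmem
    rwa [hfX] at this
  -- value of additive functions
  have hsumi : ∀ i ∈ Finset.Icc 1 (k-1),
      ∑ v ∈ X, w i v = ((X ∩ Vs i).card : ℝ) * (nt:ℝ) ^ (k - i) := by
    intro i hi
    calc ∑ v ∈ X, w i v = ∑ v ∈ X, (if v ∈ Vs i then (nt:ℝ) ^ (k-i) else 0) :=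
          Finset.sum_congr rfl (fun v _ => hw i hi v)
      _ = ∑ _v ∈ X ∩ Vs i, (nt:ℝ) ^ (k-i) := Finset.sum_ite_mem _ _ _
      _ = _ := by rw [Finset.sum_const, nsmul_eq_mul]
  set g : ℕ → ℝ := fun i => ∑ v ∈ X ∩ Vs i, w k v with hgdef
  -- the partition of the sum over X
  have hXeq : X = (Finset.Icc 1 (k-1)).biUnion (fun i => X ∩ Vs i) := by
    ext u
    simp only [Finset.mem_biUnion, Finset.mem_inter]
    constructor
    · intro hu
      obtain ⟨i, hiI, hui⟩ := hcover u
      exact ⟨i, hiI, hu, hui⟩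
    · rintro ⟨i, -, hu, -⟩; exact hu
  have hMsum : ∑ v ∈ X, w k v = ∑ i ∈ Finset.Icc 1 (k-1), g i := by
    conv_lhs => rw [hXeq]
    refine Finset.sum_biUnion ?_
    intro i hi j hj hij
    have hd := hdisj i (Finset.mem_coe.mp hi) j (Finset.mem_coe.mp hj) hij
    exact Finset.disjoint_left.mpr (fun a hai haj =>
      Finset.disjoint_left.mp hd (Finset.mem_inter.mp hai).2 (Finset.mem_inter.mp haj).2)
  -- w k on bad elements
  have hwkbad : ∀ i ∈ Finset.Icc 1 (k-1), ∀ v ∈ Vs i, v ∉ Ss i → w k v = -(nt:ℝ)^(k+1) := by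
    intro i hi v hvV hvS
    apply hwk2
    intro j hj hvSj
    by_cases hij : i = j
    · exact hvS (hij ▸ hvSj)
    · exact (Finset.disjoint_left.mp (hdisj i hi j hj hij) hvV) ((hS j hj).1 hvSj)
  -- value of g on clean indices
  have hgclean : ∀ i ∈ Finset.Icc 1 (k-1), X ∩ Vs i ⊆ Ss i →
      g i = ((X ∩ Vs i).card : ℝ) * ((1 - (γ:ℝ)) * (nt:ℝ) ^ (k - i)) := by
    intro i hi hsub
    calc g i = ∑ _v ∈ X ∩ Vs i, (1-(γ:ℝ)) * (nt:ℝ)^(k-i) :=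
          Finset.sum_congr rfl (fun v hv => hwk1 i hi v (hsub hv))
      _ = _ := by rw [Finset.sum_const, nsmul_eq_mul]
  -- bound of g on bad indices
  have hgbad : ∀ i ∈ Finset.Icc 1 (k-1), ¬ (X ∩ Vs i ⊆ Ss i) →
      g i ≤ (1-(γ:ℝ)) * (nt:ℝ)^k - (nt:ℝ)^(k+1) := by
    intro i hi hnsub
    obtain ⟨v0, hv0, hv0S⟩ := Finset.not_subset.mp hnsub
    have hik : i ≤ k - 1 := (Finset.mem_Icc.mp hi).2
    have hsplit := Finset.sum_filter_add_sum_filter_not (X ∩ Vs i) (· ∈ Ss i) (w k)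
    have hA : ∑ v ∈ (X ∩ Vs i).filter (· ∈ Ss i), w k v ≤ (1-(γ:ℝ)) * (nt:ℝ)^k := by
      have h1 : ∑ v ∈ (X ∩ Vs i).filter (· ∈ Ss i), w k v
          = (((X ∩ Vs i).filter (· ∈ Ss i)).card : ℝ) * ((1-(γ:ℝ)) * (nt:ℝ)^(k-i)) := by
        rw [Finset.sum_congr rfl (fun v hv => hwk1 i hi v (Finset.mem_filter.mp hv).2),
          Finset.sum_const, nsmul_eq_mul]
      rw [h1]
      have h2 : ((X ∩ Vs i).filter (· ∈ Ss i)).card ≤ (Ss i).card :=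
        Finset.card_le_card (fun v hv => (Finset.mem_filter.mp hv).2)
      have h3 : ((Ss i).card : ℝ) ≤ (nt:ℝ) ^ i := by
        rw [(hS i hi).2]
        nlinarith [pow_pos hn0 i]
      have hcle : (((X ∩ Vs i).filter (· ∈ Ss i)).card : ℝ) ≤ (nt:ℝ) ^ i := by
        calc (((X ∩ Vs i).filter (· ∈ Ss i)).card : ℝ) ≤ ((Ss i).card : ℝ) := by
              exact_mod_cast h2
          _ ≤ _ := h3
      have hfac : (0:ℝ) ≤ (1-(γ:ℝ)) * (nt:ℝ)^(k-i) :=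
        mul_nonneg hg1' (pow_nonneg hn0.le _)
      calc (((X ∩ Vs i).filter (· ∈ Ss i)).card : ℝ) * ((1-(γ:ℝ)) * (nt:ℝ)^(k-i))
          ≤ (nt:ℝ)^i * ((1-(γ:ℝ)) * (nt:ℝ)^(k-i)) := mul_le_mul_of_nonneg_right hcle hfac
        _ = (1-(γ:ℝ)) * ((nt:ℝ)^i * (nt:ℝ)^(k-i)) := by ring
        _ = (1-(γ:ℝ)) * (nt:ℝ)^k := by rw [hpowadd i (k-i) k (by omega)]
    have hB : ∑ v ∈ (X ∩ Vs i).filter (fun v => ¬ (v ∈ Ss i)), w k v ≤ -(nt:ℝ)^(k+1) := by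
      have h1 : ∀ v ∈ (X ∩ Vs i).filter (fun v => ¬ (v ∈ Ss i)), w k v = -(nt:ℝ)^(k+1) := by
        intro v hv
        exact hwkbad i hi v (Finset.mem_inter.mp (Finset.mem_filter.mp hv).1).2
          (Finset.mem_filter.mp hv).2
      rw [Finset.sum_congr rfl h1, Finset.sum_const, nsmul_eq_mul]
      have hc1 : 1 ≤ ((X ∩ Vs i).filter (fun v => ¬ (v ∈ Ss i))).card :=
        Finset.card_pos.mpr ⟨v0, Finset.mem_filter.mpr ⟨hv0, hv0S⟩⟩
      have hc1R : (1:ℝ) ≤ (((X ∩ Vs i).filter (fun v => ¬ (v ∈ Ss i))).card : ℝ) := by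
        exact_mod_cast hc1
      nlinarith [pow_pos hn0 (k+1)]
    have : g i = ∑ v ∈ (X ∩ Vs i).filter (· ∈ Ss i), w k v
        + ∑ v ∈ (X ∩ Vs i).filter (fun v => ¬ (v ∈ Ss i)), w k v := hsplit.symm
    rw [this]
    linarith
  -- M is nonnegative
  have hM0 : (0:ℝ) ≤ ∑ v ∈ X, w k v := by
    have h1 := hub 1 le_rfl (by omega)
    have h2 := hsumi 1 (Finset.mem_Icc.mpr ⟨le_rfl, by omega⟩)
    rw [h2] at h1
    have h3 : (0:ℝ) ≤ ((X ∩ Vs 1).card : ℝ) * (nt:ℝ) ^ (k-1) :=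
      mul_nonneg (Nat.cast_nonneg _) (pow_nonneg hn0.le _)
    linarith
  have hcardI : (Finset.Icc 1 (k-1)).card = k - 1 := by
    rw [Nat.card_Icc]; omega
  by_cases hbadex : ∃ j ∈ Finset.Icc 1 (k-1), ¬ (X ∩ Vs j ⊆ Ss j)
  · -- some index has a bad element: contradiction with M ≥ 0
    obtain ⟨j, hjI, hjbad⟩ := hbadex
    have h1I : (1:ℕ) ∈ Finset.Icc 1 (k-1) := Finset.mem_Icc.mpr ⟨le_rfl, by omega⟩
    -- per-index bounds away from j
    have hble : ∀ i ∈ (Finset.Icc 1 (k-1)).erase j,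
        g i ≤ (if i = 1 then (nt:ℝ)^k else ((γ:ℝ) * (nt:ℝ) / ((k:ℝ)-2)) * (nt:ℝ)^(k-2)) := by
      intro i hi
      have hiI := Finset.mem_of_mem_erase hi
      have hi1 : 1 ≤ i := (Finset.mem_Icc.mp hiI).1
      have hik1 : i ≤ k - 1 := (Finset.mem_Icc.mp hiI).2
      by_cases hcl : X ∩ Vs i ⊆ Ss i
      · rw [hgclean i hiI hcl]
        by_cases h1 : i = 1
        · subst h1
          rw [if_pos rfl]
          have hcV : ((X ∩ Vs 1).card : ℝ) ≤ (nt:ℝ) := by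
            have := Finset.card_le_card (Finset.inter_subset_right : X ∩ Vs 1 ⊆ Vs 1)
            rw [hcard 1 h1I] at this
            have : ((X ∩ Vs 1).card : ℝ) ≤ ((nt ^ 1 : ℕ) : ℝ) := by exact_mod_cast this
            simpa using this
          have hfac : (0:ℝ) ≤ (1-(γ:ℝ)) * (nt:ℝ)^(k-1) :=
            mul_nonneg hg1' (pow_nonneg hn0.le _)
          calc ((X ∩ Vs 1).card : ℝ) * ((1-(γ:ℝ)) * (nt:ℝ)^(k-1))
              ≤ (nt:ℝ) * ((1-(γ:ℝ)) * (nt:ℝ)^(k-1)) := mul_le_mul_of_nonneg_right hcV hfac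
            _ ≤ (nt:ℝ) * (1 * (nt:ℝ)^(k-1)) := by
                have : (1-(γ:ℝ)) * (nt:ℝ)^(k-1) ≤ 1 * (nt:ℝ)^(k-1) :=
                  mul_le_mul_of_nonneg_right (by linarith) (pow_nonneg hn0.le _)
                exact mul_le_mul_of_nonneg_left this hn0.le
            _ = (nt:ℝ) * (nt:ℝ)^(k-1) := by ring
            _ = (nt:ℝ)^k := by
                have := hpowadd 1 (k-1) k (by omega)
                rwa [pow_one] at this
        · rw [if_neg h1]
          have hi2 : 2 ≤ i := by omega
          have hcc := hcon i hi2 hik1 hcl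
          have hple : (nt:ℝ)^(k-i) ≤ (nt:ℝ)^(k-2) := pow_le_pow_right₀ hn1 (by omega)
          have hfac2 : (1-(γ:ℝ)) * (nt:ℝ)^(k-i) ≤ (nt:ℝ)^(k-2) := by
            calc (1-(γ:ℝ)) * (nt:ℝ)^(k-i) ≤ 1 * (nt:ℝ)^(k-i) :=
                  mul_le_mul_of_nonneg_right (by linarith) (pow_nonneg hn0.le _)
              _ = (nt:ℝ)^(k-i) := one_mul _
              _ ≤ _ := hple
          exact mul_le_mul hcc.le hfac2
            (mul_nonneg hg1' (pow_nonneg hn0.le _)) hc0.le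
      · have := hgbad i hiI hcl
        have hle0 : g i ≤ 0 := by
          have h4 : (1-(γ:ℝ)) * (nt:ℝ)^k ≤ (nt:ℝ)^(k+1) := by
            have h5 : (1-(γ:ℝ)) * (nt:ℝ)^k ≤ 1 * (nt:ℝ)^k :=
              mul_le_mul_of_nonneg_right (by linarith) (pow_nonneg hn0.le _)
            have h6 : (nt:ℝ)^k ≤ (nt:ℝ)^(k+1) := pow_le_pow_right₀ hn1 (by omega)
            linarith
          linarith
        by_cases h1 : i = 1
        · rw [if_pos h1]; have := pow_pos hn0 k; linarith
        · rw [if_neg h1]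
          have : (0:ℝ) < ((γ:ℝ) * (nt:ℝ) / ((k:ℝ)-2)) * (nt:ℝ)^(k-2) :=
            mul_pos hc0 (pow_pos hn0 _)
          linarith
    have htail : ∑ i ∈ (Finset.Icc 1 (k-1)).erase j, g i ≤ (nt:ℝ)^k + (γ:ℝ) * (nt:ℝ)^(k-1) := by
      have h2 : ∑ i ∈ (Finset.Icc 1 (k-1)).erase j,
            (if i = 1 then (nt:ℝ)^k else ((γ:ℝ) * (nt:ℝ) / ((k:ℝ)-2)) * (nt:ℝ)^(k-2))
          ≤ ∑ i ∈ Finset.Icc 1 (k-1),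
            (if i = 1 then (nt:ℝ)^k else ((γ:ℝ) * (nt:ℝ) / ((k:ℝ)-2)) * (nt:ℝ)^(k-2)) := by
        refine Finset.sum_le_sum_of_subset_of_nonneg (Finset.erase_subset _ _) ?_
        intro i hi _
        by_cases h1 : i = 1
        · rw [if_pos h1]; positivity
        · rw [if_neg h1]; positivity
      have h3 : ∑ i ∈ Finset.Icc 1 (k-1),
            (if i = 1 then (nt:ℝ)^k else ((γ:ℝ) * (nt:ℝ) / ((k:ℝ)-2)) * (nt:ℝ)^(k-2))
          = (nt:ℝ)^k + ((k:ℝ)-2) * (((γ:ℝ) * (nt:ℝ) / ((k:ℝ)-2)) * (nt:ℝ)^(k-2)) := by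
        rw [← Finset.add_sum_erase _ _ h1I, if_pos rfl]
        congr 1
        rw [Finset.sum_congr rfl (fun i hi => if_neg (Finset.ne_of_mem_erase hi)),
          Finset.sum_const, nsmul_eq_mul, Finset.card_erase_of_mem h1I, hcardI]
        congr 1
        have hkk : ((k - 1 - 1 : ℕ) : ℝ) = (k:ℝ) - 2 := by
          have h5 : (k - 1 - 1 : ℕ) = k - 2 := by omega
          rw [h5, Nat.cast_sub (by omega)]
          norm_num
        rw [hkk]
      have h4 : ((k:ℝ)-2) * (((γ:ℝ) * (nt:ℝ) / ((k:ℝ)-2)) * (nt:ℝ)^(k-2))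
          = (γ:ℝ) * (nt:ℝ)^(k-1) := by
        have h5 : ((k:ℝ)-2) * ((γ:ℝ) * (nt:ℝ) / ((k:ℝ)-2)) = (γ:ℝ) * (nt:ℝ) := by
          field_simp
        have h6 : (nt:ℝ) * (nt:ℝ)^(k-2) = (nt:ℝ)^(k-1) := by
          have := hpowadd 1 (k-2) (k-1) (by omega)
          rwa [pow_one] at this
        calc ((k:ℝ)-2) * (((γ:ℝ) * (nt:ℝ) / ((k:ℝ)-2)) * (nt:ℝ)^(k-2))
            = (((k:ℝ)-2) * ((γ:ℝ) * (nt:ℝ) / ((k:ℝ)-2))) * (nt:ℝ)^(k-2) := by ring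
          _ = ((γ:ℝ) * (nt:ℝ)) * (nt:ℝ)^(k-2) := by rw [h5]
          _ = (γ:ℝ) * ((nt:ℝ) * (nt:ℝ)^(k-2)) := by ring
          _ = (γ:ℝ) * (nt:ℝ)^(k-1) := by rw [h6]
      have h5 := le_trans (Finset.sum_le_sum hble) h2
      rw [h3, h4] at h5
      exact h5
    have hMle : ∑ v ∈ X, w k v ≤ ((1-(γ:ℝ)) * (nt:ℝ)^k - (nt:ℝ)^(k+1))
        + ((nt:ℝ)^k + (γ:ℝ) * (nt:ℝ)^(k-1)) := by
      rw [hMsum, ← Finset.add_sum_erase _ g hjI]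
      exact add_le_add (hgbad j hjI hjbad) htail
    have hx : (0:ℝ) < (nt:ℝ)^(k-1) := pow_pos hn0 _
    have hxk : (nt:ℝ)^k = (nt:ℝ)^(k-1) * (nt:ℝ) := by
      have := hpowadd (k-1) 1 k (by omega)
      rw [pow_one] at this
      linarith [this]
    have hxk1 : (nt:ℝ)^(k+1) = (nt:ℝ)^k * (nt:ℝ) := pow_succ _ _
    nlinarith [mul_nonneg (mul_nonneg hx.le (by linarith : (0:ℝ) ≤ (nt:ℝ)))
        (by linarith : (0:ℝ) ≤ (nt:ℝ) - 2),
      mul_pos (mul_pos hg0 hx) (by linarith : (0:ℝ) < (nt:ℝ) - 1)]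
  · -- all indices clean
    push_neg at hbadex
    obtain ⟨v, hv⟩ := hXne
    obtain ⟨iv, hivI, hvVi⟩ := hcover v
    set N := (Finset.Icc 1 (k-1)).filter (fun i => (X ∩ Vs i).Nonempty) with hN
    have hNne : N.Nonempty :=
      ⟨iv, Finset.mem_filter.mpr ⟨hivI, ⟨v, Finset.mem_inter.mpr ⟨hv, hvVi⟩⟩⟩⟩
    set i0 := N.min' hNne with hi0def
    have hi0N : i0 ∈ N := N.min'_mem hNne
    have hi0I : i0 ∈ Finset.Icc 1 (k-1) := (Finset.mem_filter.mp hi0N).1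
    have hi0ne : (X ∩ Vs i0).Nonempty := (Finset.mem_filter.mp hi0N).2
    have hi01 : 1 ≤ i0 := (Finset.mem_Icc.mp hi0I).1
    have hi0k : i0 ≤ k - 1 := (Finset.mem_Icc.mp hi0I).2
    have ha0 : (1:ℝ) ≤ ((X ∩ Vs i0).card : ℝ) := by
      exact_mod_cast Finset.card_pos.mpr hi0ne
    have htailb : ∀ i ∈ (Finset.Icc 1 (k-1)).erase i0,
        g i ≤ ((γ:ℝ) * (nt:ℝ) / ((k:ℝ)-2)) * ((1-(γ:ℝ)) * (nt:ℝ)^(k-i0-1)) := by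
      intro i hi
      have hiI := Finset.mem_of_mem_erase hi
      have hine := Finset.ne_of_mem_erase hi
      have hik1 : i ≤ k - 1 := (Finset.mem_Icc.mp hiI).2
      by_cases hne : (X ∩ Vs i).Nonempty
      · have hiN : i ∈ N := Finset.mem_filter.mpr ⟨hiI, hne⟩
        have hlt : i0 < i := lt_of_le_of_ne (N.min'_le i hiN) (Ne.symm hine)
        have hi2 : 2 ≤ i := by omega
        have hcc := hcon i hi2 hik1 (hbadex i hiI)
        rw [hgclean i hiI (hbadex i hiI)]
        have hple : (nt:ℝ)^(k-i) ≤ (nt:ℝ)^(k-i0-1) := pow_le_pow_right₀ hn1 (by omega)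
        have hfac2 : (1-(γ:ℝ)) * (nt:ℝ)^(k-i) ≤ (1-(γ:ℝ)) * (nt:ℝ)^(k-i0-1) :=
          mul_le_mul_of_nonneg_left hple hg1'
        exact mul_le_mul hcc.le hfac2
          (mul_nonneg hg1' (pow_nonneg hn0.le _)) hc0.le
      · rw [Finset.not_nonempty_iff_eq_empty] at hne
        have hgz : g i = 0 := by
          simp only [hgdef, hne, Finset.sum_empty]
        rw [hgz]
        have : (0:ℝ) ≤ ((γ:ℝ) * (nt:ℝ) / ((k:ℝ)-2)) * ((1-(γ:ℝ)) * (nt:ℝ)^(k-i0-1)) :=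
          mul_nonneg hc0.le (mul_nonneg hg1' (pow_nonneg hn0.le _))
        linarith
    have hcarderase : ((Finset.Icc 1 (k-1)).erase i0).card = k - 2 := by
      rw [Finset.card_erase_of_mem hi0I, hcardI]; omega
    have htail : ∑ i ∈ (Finset.Icc 1 (k-1)).erase i0, g i
        ≤ (γ:ℝ) * ((1-(γ:ℝ)) * (nt:ℝ)^(k-i0)) := by
      have h1 := Finset.sum_le_card_nsmul _ _ _ htailb
      rw [hcarderase] at h1
      have h2 : ((k-2:ℕ) : ℝ) = (k:ℝ) - 2 := by
        rw [Nat.cast_sub (by omega)]; norm_num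
      rw [nsmul_eq_mul, h2] at h1
      have h3 : ((k:ℝ)-2) * (((γ:ℝ) * (nt:ℝ) / ((k:ℝ)-2)) * ((1-(γ:ℝ)) * (nt:ℝ)^(k-i0-1)))
          = (γ:ℝ) * ((1-(γ:ℝ)) * (nt:ℝ)^(k-i0)) := by
        have h5 : ((k:ℝ)-2) * ((γ:ℝ) * (nt:ℝ) / ((k:ℝ)-2)) = (γ:ℝ) * (nt:ℝ) := by
          field_simp
        have h6 : (nt:ℝ) * (nt:ℝ)^(k-i0-1) = (nt:ℝ)^(k-i0) := by
          have := hpowadd 1 (k-i0-1) (k-i0) (by omega)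
          rwa [pow_one] at this
        calc ((k:ℝ)-2) * (((γ:ℝ) * (nt:ℝ) / ((k:ℝ)-2)) * ((1-(γ:ℝ)) * (nt:ℝ)^(k-i0-1)))
            = (((k:ℝ)-2) * ((γ:ℝ) * (nt:ℝ) / ((k:ℝ)-2))) * ((1-(γ:ℝ)) * (nt:ℝ)^(k-i0-1)) := by
              ring
          _ = ((γ:ℝ) * (nt:ℝ)) * ((1-(γ:ℝ)) * (nt:ℝ)^(k-i0-1)) := by rw [h5]
          _ = (γ:ℝ) * ((1-(γ:ℝ)) * ((nt:ℝ) * (nt:ℝ)^(k-i0-1))) := by ring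
          _ = (γ:ℝ) * ((1-(γ:ℝ)) * (nt:ℝ)^(k-i0)) := by rw [h6]
      rw [h3] at h1
      exact h1
    have hkey : ((X ∩ Vs i0).card : ℝ) * (nt:ℝ)^(k-i0) ≤ ∑ v ∈ X, w k v := by
      have h1 := hub i0 hi01 (by omega)
      rwa [hsumi i0 hi0I] at h1
    have hMle : ∑ v ∈ X, w k v ≤ ((X ∩ Vs i0).card : ℝ) * ((1-(γ:ℝ)) * (nt:ℝ)^(k-i0))
        + (γ:ℝ) * ((1-(γ:ℝ)) * (nt:ℝ)^(k-i0)) := by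
      rw [hMsum, ← Finset.add_sum_erase _ g hi0I]
      exact add_le_add (le_of_eq (hgclean i0 hi0I (hbadex i0 hi0I))) htail
    have hy : (0:ℝ) < (nt:ℝ)^(k-i0) := pow_pos hn0 _
    have hfin : ∀ a y : ℝ, 1 ≤ a → 0 < y →
        a * y ≤ a * ((1-(γ:ℝ)) * y) + (γ:ℝ) * ((1-(γ:ℝ)) * y) → False := by
      intro a y h1 h2 h3
      nlinarith [mul_pos hg0 h2,
        mul_nonneg (mul_nonneg hg0.le h2.le) (by linarith : (0:ℝ) ≤ a - 1),
        mul_pos (mul_pos hg0 hg0) h2]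
    exact hfin _ _ ha0 hy (le_trans hkey hMle)
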